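/- For all real u, |cos((1-i)u)|² > (1/4)·cosh(2u). -/

import Mathlib

open Complex

/-- For all real `u`, `|cos((1-i)u)|² > (1/4)·cosh(2u)`. -/
theorem stmt_2 (u : ℝ) :
    ‖Complex.cos ((1 - Complex.I) * u)‖^2 > 1/4 * Real.cosh (2 * u) := by
  have h : Complex.cos ((1 - Complex.I) * u)
      = (Real.cos u * Real.cosh u : ℝ) + (Real.sin u * Real.sinh u : ℝ) * Complex.I := by
    have h1 : (1 - Complex.I) * u = (u : ℂ) - (u : ℂ) * Complex.I := by ring
    rw [h1, Complex.cos_sub, Complex.cos_mul_I, Complex.sin_mul_I]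
    push_cast
    ring
  rw [h, Complex.sq_norm, Complex.normSq_add_mul_I]
  have hc : Real.cos u ^ 2 + Real.sin u ^ 2 = 1 := Real.cos_sq_add_sin_sq u
  have hh : Real.cosh u ^ 2 - Real.sinh u ^ 2 = 1 := Real.cosh_sq_sub_sinh_sq u
  have h2 : Real.cosh (2 * u) = 2 * Real.sinh u ^ 2 + 1 := by
    rw [Real.cosh_two_mul]; nlinarith
  have hcsq : Real.cos u ^ 2 ≥ 1 - u ^ 2 := by
    have h3 := Real.cos_sq u
    have h4 : 1 - (2 * u) ^ 2 / 2 ≤ Real.cos (2 * u) :=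
      Real.one_sub_sq_div_two_le_cos
    nlinarith
  have hsinh : Real.sinh u ^ 2 ≥ u ^ 2 := by
    have h5 : |u| ≤ Real.sinh |u| := Real.self_le_sinh_iff.mpr (abs_nonneg u)
    have h6 := Real.abs_sinh u
    nlinarith [abs_nonneg u, _root_.sq_abs u, _root_.sq_abs (Real.sinh u)]
  nlinarith [sq_nonneg (Real.cos u * Real.cosh u), sq_nonneg (Real.sin u * Real.sinh u),
    sq_nonneg (Real.cos u), sq_nonneg (Real.sin u), sq_nonneg (Real.sinh u),
    Real.one_le_cosh u, mul_pow (Real.cos u) (Real.cosh u) 2,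
    mul_pow (Real.sin u) (Real.sinh u) 2]
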